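/- Let R_r = F_{p^k}[v]/(v^{r+1} - v) with p prime, r > 1, gcd(r,p)=1. Define e_1 = (1/r)(v + v^2 + ... + v^r), e_2 = -(1/r)(v + v^2 + ... + v^{r-1}) + ((r-1)/r)v^r, and e_3 = 1 - v^r. Then e_1, e_2, e_3 are pairwise orthogonal idempotents (e_i e_j = 0 for i ≠ j, e_i^2 = e_i) with e_1 + e_2 + e_3 = 1. -/

import Mathlib

open Polynomial

/-- In `R_r = F_{p^k}[v]/(v^{r+1} - v)` with `p` prime, `r > 1`,
`gcd(r,p)=1`, the elements `e_1 = (1/r)(v + ... + v^r)`,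
`e_2 = -(1/r)(v + ... + v^{r-1}) + ((r-1)/r) v^r`, and `e_3 = 1 - v^r`
are pairwise orthogonal idempotents summing to `1`. -/
theorem stmt2 (p k r : ℕ) [Fact p.Prime] (hk : 0 < k) (hr : 1 < r)
    (hgcd : Nat.gcd r p = 1) :
    let F := GaloisField p k
    let Rr := AdjoinRoot ((X : F[X]) ^ (r + 1) - X)
    let v : Rr := AdjoinRoot.root ((X : F[X]) ^ (r + 1) - X)
    let e1 : Rr := algebraMap F Rr ((r : F)⁻¹) * ∑ i ∈ Finset.Icc 1 r, v ^ i
    let e2 : Rr := -(algebraMap F Rr ((r : F)⁻¹) * ∑ i ∈ Finset.Icc 1 (r - 1), v ^ i)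
      + algebraMap F Rr (((r : F) - 1) * (r : F)⁻¹) * v ^ r
    let e3 : Rr := 1 - v ^ r
    (e1 * e1 = e1 ∧ e2 * e2 = e2 ∧ e3 * e3 = e3) ∧
    (e1 * e2 = 0 ∧ e1 * e3 = 0 ∧ e2 * e3 = 0) ∧
    e1 + e2 + e3 = 1 := by
  intro F Rr v e1 e2 e3
  obtain ⟨m, rfl⟩ : ∃ m, r = m + 1 := ⟨r - 1, by omega⟩
  have h0 : v ^ (m + 1 + 1) = v := by
    have h := AdjoinRoot.mk_self (f := (X : F[X]) ^ (m + 1 + 1) - X)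
    rw [map_sub, map_pow, AdjoinRoot.mk_X] at h
    exact sub_eq_zero.mp h
  set s : Rr := ∑ i ∈ Finset.Icc 1 (m + 1), v ^ i with hs
  set cc : Rr := algebraMap F Rr (((m + 1 : ℕ) : F))⁻¹ with hcc
  have hF : ((m + 1 : ℕ) : F) ≠ 0 := by
    rw [Ne, CharP.cast_eq_zero_iff F p]
    intro hdvd
    have h1 : p ∣ Nat.gcd (m + 1) p := Nat.dvd_gcd hdvd dvd_rfl
    rw [hgcd] at h1
    have h2 := Nat.dvd_one.mp h1
    have h3 := (Fact.out (p := p.Prime)).one_lt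
    omega
  have hcr : cc * ((m + 1 : ℕ) : Rr) = 1 := by
    rw [hcc, ← map_natCast (algebraMap F Rr) (m + 1), ← map_mul, inv_mul_cancel₀ hF, map_one]
  have hvs : v * s = s := by
    have hs' : s = ∑ i ∈ Finset.range (m + 1), v ^ (i + 1) := by
      rw [hs, ← Finset.Ico_add_one_right_eq_Icc, Finset.sum_Ico_eq_sum_range]
      simp [add_comm]
    have htel := Finset.sum_range_sub (fun i => v ^ (i + 1)) (m + 1)
    rw [Finset.sum_sub_distrib] at htel
    simp only [h0, zero_add, pow_one, sub_self] at htel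
    have h2 : ∑ i ∈ Finset.range (m + 1), v ^ (i + 1 + 1)
        = ∑ i ∈ Finset.range (m + 1), v ^ (i + 1) := sub_eq_zero.mp htel
    rw [hs', Finset.mul_sum]
    calc ∑ i ∈ Finset.range (m + 1), v * v ^ (i + 1)
        = ∑ i ∈ Finset.range (m + 1), v ^ (i + 1 + 1) := by
          refine Finset.sum_congr rfl fun i _ => ?_; ring
      _ = ∑ i ∈ Finset.range (m + 1), v ^ (i + 1) := h2
  have hpow : ∀ n, v ^ (n + 1) * s = s := by
    intro n
    induction n with
    | zero => simpa using hvs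
    | succ n ih =>
      calc v ^ (n + 1 + 1) * s = v ^ (n + 1) * (v * s) := by ring
        _ = s := by rw [hvs, ih]
  have hss : s * s = ((m + 1 : ℕ) : Rr) * s := by
    calc s * s = ∑ i ∈ Finset.Icc 1 (m + 1), v ^ i * s := by
          conv_lhs => rw [hs]
          rw [Finset.sum_mul]
      _ = ∑ _i ∈ Finset.Icc 1 (m + 1), s := by
          refine Finset.sum_congr rfl fun i hi => ?_
          obtain ⟨n, rfl⟩ : ∃ n, i = n + 1 := ⟨i - 1, by have := (Finset.mem_Icc.mp hi).1; omega⟩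
          exact hpow n
      _ = ((m + 1 : ℕ) : Rr) * s := by
          rw [Finset.sum_const, Nat.card_Icc]
          simp [nsmul_eq_mul]
  have hvr : v ^ (m + 1) * s = s := hpow m
  have hvv : v ^ (m + 1) * v ^ (m + 1) = v ^ (m + 1) := by
    calc v ^ (m + 1) * v ^ (m + 1) = v ^ m * v ^ (m + 1 + 1) := by ring
      _ = v ^ m * v := by rw [h0]
      _ = v ^ (m + 1) := by ring
  have he1 : e1 = cc * s := rfl
  have he3 : e3 = 1 - v ^ (m + 1) := rfl
  have hsm : ∑ i ∈ Finset.Icc 1 m, v ^ i = s - v ^ (m + 1) := by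
    have h3 := Finset.sum_Icc_succ_top (a := 1) (b := m) (by omega) (fun i => v ^ i)
    rw [← hs] at h3
    linear_combination -h3
  have he2 : e2 = v ^ (m + 1) - cc * s := by
    calc e2 = -(cc * ∑ i ∈ Finset.Icc 1 m, v ^ i)
        + algebraMap F Rr ((((m + 1 : ℕ) : F) - 1) * ((m + 1 : ℕ) : F)⁻¹) * v ^ (m + 1) := rfl
      _ = v ^ (m + 1) - cc * s := by
          rw [hsm, map_mul, map_sub, map_one, map_natCast]
          linear_combination (v ^ (m + 1)) * hcr
  refine ⟨⟨?_, ?_, ?_⟩, ⟨?_, ?_, ?_⟩, ?_⟩ <;> simp only [he1, he2, he3]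
  · linear_combination cc * cc * hss + cc * s * hcr
  · linear_combination hvv - 2 * cc * hvr + cc * cc * hss + cc * s * hcr
  · linear_combination hvv
  · linear_combination cc * hvr - cc * cc * hss - cc * s * hcr
  · linear_combination -cc * hvr
  · linear_combination -hvv + cc * hvr
  · ring
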